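/- Let ω_1, …, ω_m be positive integers with ω_i ≤ (1/2)·Σ_{j=1}^m ω_j for every i. Then there exists a configuration (V_1, …, V_m) of 2-dimensional subspaces of ℂ⁴ that is ℘_ω-semistable but not ℘_ω-stable. -/

import Mathlib

open Module

noncomputable section

variable {V : Type*} [AddCommGroup V] [Module ℂ V]

/-- `℘_ω(H) = (1/dim H)·Σ_i ω_i·dim(V_i ∩ H)` for a configuration of subspaces of `V`. -/
def slopeSub {m : ℕ} (ω : Fin m → ℕ) (Vc : Fin m → Submodule ℂ V) (H : Submodule ℂ V) : ℚ :=
  (∑ i, (ω i : ℚ) * (finrank ℂ ↥(Vc i ⊓ H) : ℚ)) / (finrank ℂ ↥H : ℚ)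

/-- `℘_ω({V_i}) = (1/dim V)·Σ_i ω_i·dim V_i`. -/
def totalSub {m : ℕ} (ω : Fin m → ℕ) (Vc : Fin m → Submodule ℂ V) : ℚ :=
  (∑ i, (ω i : ℚ) * (finrank ℂ ↥(Vc i) : ℚ)) / (finrank ℂ V : ℚ)

/-- The configuration `{V_i}` is `℘_ω`-semistable. -/
def SubSemistable {m : ℕ} (ω : Fin m → ℕ) (Vc : Fin m → Submodule ℂ V) : Prop :=
  ∀ H : Submodule ℂ V, H ≠ ⊥ → H ≠ ⊤ → slopeSub ω Vc H ≤ totalSub ω Vc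

/-- The configuration `{V_i}` is `℘_ω`-stable. -/
def SubStable {m : ℕ} (ω : Fin m → ℕ) (Vc : Fin m → Submodule ℂ V) : Prop :=
  ∀ H : Submodule ℂ V, H ≠ ⊥ → H ≠ ⊤ → slopeSub ω Vc H < totalSub ω Vc

/-! ### Auxiliary construction -/

def aa (t : ℂ) : Fin 4 → ℂ := ![1, 0, t, 0]
def bb (t : ℂ) : Fin 4 → ℂ := ![0, 1, 0, t]
def WW (t : ℂ) : Submodule ℂ (Fin 4 → ℂ) := Submodule.span ℂ {aa t, bb t}

lemma aa_mem_WW (t : ℂ) : aa t ∈ WW t :=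
  Submodule.subset_span (Set.mem_insert _ _)

lemma lin_indep_ab (t : ℂ) : LinearIndependent ℂ ![aa t, bb t] := by
  rw [LinearIndependent.pair_iff]
  intro s u h
  have h0 := congrFun h 0
  have h1 := congrFun h 1
  simp [aa, bb] at h0 h1
  exact ⟨h0, h1⟩

lemma WW_rank (t : ℂ) : finrank ℂ ↥(WW t) = 2 := by
  have hr : Set.range ![aa t, bb t] = {aa t, bb t} := by
    simp [Matrix.range_cons, Matrix.range_empty]; exact Set.pair_comm _ _
  rw [WW, ← hr, finrank_span_eq_card (lin_indep_ab t)]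
  simp

lemma WW_disjoint {s t : ℂ} (hst : s ≠ t) : WW s ⊓ WW t = ⊥ := by
  rw [eq_bot_iff]
  rintro x ⟨hx1, hx2⟩
  obtain ⟨c, d, hcd⟩ := Submodule.mem_span_pair.mp hx1
  obtain ⟨c', d', hcd'⟩ := Submodule.mem_span_pair.mp hx2
  have heq : c • aa s + d • bb s = c' • aa t + d' • bb t := hcd.trans hcd'.symm
  have e0 := congrFun heq 0
  have e1 := congrFun heq 1
  have e2 := congrFun heq 2
  have e3 := congrFun heq 3
  simp [aa, bb] at e0 e1 e2 e3
  have hc : c = 0 := by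
    have : c * s = c * t := by rw [e2, ← e0]
    rcases mul_eq_zero.mp (by ring_nf; linear_combination this : c * (s - t) = 0) with h | h
    · exact h
    · exact absurd (sub_eq_zero.mp h) hst
  have hd : d = 0 := by
    have : d * s = d * t := by rw [e3, ← e1]
    rcases mul_eq_zero.mp (by linear_combination this : d * (s - t) = 0) with h | h
    · exact h
    · exact absurd (sub_eq_zero.mp h) hst
  have : x = 0 := by rw [← hcd, hc, hd]; simp
  simp [this]

def u0 : Fin 4 → ℂ := ![1, 0, 0, 0]
def u2 : Fin 4 → ℂ := ![0, 0, 1, 0]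
def H0 : Submodule ℂ (Fin 4 → ℂ) := Submodule.span ℂ {u0, u2}

lemma lin_indep_u : LinearIndependent ℂ ![u0, u2] := by
  rw [LinearIndependent.pair_iff]
  intro s u h
  have h0 := congrFun h 0
  have h2 := congrFun h 2
  simp [u0, u2] at h0 h2
  exact ⟨h0, h2⟩

lemma H0_rank : finrank ℂ ↥H0 = 2 := by
  have hr : Set.range ![u0, u2] = {u0, u2} := by
    simp [Matrix.range_cons, Matrix.range_empty]; exact Set.pair_comm _ _
  rw [H0, ← hr, finrank_span_eq_card lin_indep_u]
  simp

lemma aa_mem_H0 (t : ℂ) : aa t ∈ H0 := by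
  apply Submodule.mem_span_pair.mpr
  refine ⟨1, t, ?_⟩
  funext j
  fin_cases j <;> simp [aa, u0, u2]

lemma H0_ne_bot : H0 ≠ ⊥ := by
  intro h
  have : u0 ∈ H0 := Submodule.subset_span (Set.mem_insert _ _)
  rw [h, Submodule.mem_bot] at this
  have := congrFun this 0
  simp [u0] at this

lemma H0_ne_top : H0 ≠ ⊤ := by
  intro h
  have : (![0, 1, 0, 0] : Fin 4 → ℂ) ∈ H0 := h ▸ Submodule.mem_top
  obtain ⟨c, d, hcd⟩ := Submodule.mem_span_pair.mp this
  have := congrFun hcd 1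
  simp [u0, u2] at this

def Vcfg (m : ℕ) : Fin m → Submodule ℂ (Fin 4 → ℂ) := fun i => WW ((i : ℕ) : ℂ)

/-- The combinatorial heart of semistability. -/
lemma key_ineq {m : ℕ} (ω d : Fin m → ℕ) (h : ℕ)
    (hpair : ∀ i j, i ≠ j → d i + d j ≤ h)
    (hw : ∀ i, 2 * (ω i : ℚ) ≤ ∑ j, (ω j : ℚ)) :
    2 * ∑ i, (ω i : ℚ) * (d i : ℚ) ≤ (∑ i, (ω i : ℚ)) * (h : ℚ) := by
  cases m with
  | zero => simp
  | succ n =>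
    obtain ⟨k, -, hk⟩ := Finset.exists_max_image Finset.univ d Finset.univ_nonempty
    set S : ℚ := ∑ j, (ω j : ℚ) with hS
    have hS0 : 0 ≤ S := Finset.sum_nonneg fun i _ => by positivity
    by_cases hcase : 2 * d k ≤ h
    · have h1 : ∑ i, (ω i : ℚ) * (d i : ℚ) ≤ ∑ i, (ω i : ℚ) * (d k : ℚ) := by
        refine Finset.sum_le_sum fun i _ => ?_
        exact mul_le_mul_of_nonneg_left (by exact_mod_cast hk i (Finset.mem_univ i)) (by positivity)
      rw [← Finset.sum_mul] at h1
      have h2 : (2 : ℚ) * (d k : ℚ) ≤ (h : ℚ) := by exact_mod_cast hcase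
      nlinarith [mul_le_mul_of_nonneg_left h2 hS0]
    · push_neg at hcase
      have hdk : (h : ℚ) ≤ 2 * (d k : ℚ) := by exact_mod_cast hcase.le
      have hsplit : ∑ i, (ω i : ℚ) * (d i : ℚ)
          = (ω k : ℚ) * (d k : ℚ) + ∑ i ∈ Finset.univ.erase k, (ω i : ℚ) * (d i : ℚ) :=
        (Finset.add_sum_erase _ _ (Finset.mem_univ k)).symm
      have hSsplit : (ω k : ℚ) + ∑ i ∈ Finset.univ.erase k, (ω i : ℚ) = S := by
        rw [hS]; exact Finset.add_sum_erase Finset.univ (fun i => (ω i : ℚ)) (Finset.mem_univ k)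
      have h2 : ∑ i ∈ Finset.univ.erase k, (ω i : ℚ) * (d i : ℚ)
          ≤ (S - (ω k : ℚ)) * ((h : ℚ) - (d k : ℚ)) := by
        have hb : ∀ i ∈ Finset.univ.erase k, (ω i : ℚ) * (d i : ℚ)
            ≤ (ω i : ℚ) * ((h : ℚ) - (d k : ℚ)) := by
          intro i hi
          have hik : i ≠ k := Finset.ne_of_mem_erase hi
          have hp : (d i : ℚ) + (d k : ℚ) ≤ (h : ℚ) := by exact_mod_cast hpair i k hik
          exact mul_le_mul_of_nonneg_left (by linarith) (by positivity)
        calc ∑ i ∈ Finset.univ.erase k, (ω i : ℚ) * (d i : ℚ)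
            ≤ ∑ i ∈ Finset.univ.erase k, (ω i : ℚ) * ((h : ℚ) - (d k : ℚ)) :=
              Finset.sum_le_sum hb
          _ = (∑ i ∈ Finset.univ.erase k, (ω i : ℚ)) * ((h : ℚ) - (d k : ℚ)) :=
              (Finset.sum_mul _ _ _).symm
          _ = (S - (ω k : ℚ)) * ((h : ℚ) - (d k : ℚ)) := by rw [← hSsplit]; ring
      have hwk := hw k
      have hprod : 0 ≤ (2 * (d k : ℚ) - (h : ℚ)) * (S - 2 * (ω k : ℚ)) :=
        mul_nonneg (by linarith) (by linarith)
      nlinarith [hsplit, h2, hprod]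

/-- if each weight is at most half the total weight, there is a configuration of
2-planes in `ℂ⁴` which is `℘_ω`-semistable but not `℘_ω`-stable. -/
theorem stmt_19 (m : ℕ) (hm : 1 ≤ m) (ω : Fin m → ℕ) (hω : ∀ i, 0 < ω i)
    (hhalf : ∀ i, (ω i : ℚ) ≤ (∑ j, (ω j : ℚ)) / 2) :
    ∃ Vc : Fin m → Submodule ℂ (Fin 4 → ℂ),
      (∀ i, finrank ℂ ↥(Vc i) = 2) ∧ SubSemistable ω Vc ∧ ¬ SubStable ω Vc := by
  have hVc : ∀ i, Vcfg m i = WW ((i : ℕ) : ℂ) := fun i => rfl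
  have htinj : ∀ i j : Fin m, i ≠ j → ((i : ℕ) : ℂ) ≠ ((j : ℕ) : ℂ) := by
    intro i j hij h
    exact hij (Fin.val_injective (Nat.cast_injective h))
  have htot : totalSub ω (Vcfg m) = (∑ j, (ω j : ℚ)) / 2 := by
    unfold totalSub
    rw [finrank_fin_fun]
    simp only [show ∀ i, finrank ℂ ↥(Vcfg m i) = 2 from fun i => WW_rank _]
    rw [show (∑ i, (ω i : ℚ) * ((2 : ℕ) : ℚ)) = (∑ i, (ω i : ℚ)) * 2 from by
      rw [← Finset.sum_mul]; norm_num]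
    ring
  refine ⟨Vcfg m, fun i => WW_rank _, ?_, ?_⟩
  · -- semistable
    intro H hbot htop
    have hh0 : finrank ℂ ↥H ≠ 0 := fun h => hbot (Submodule.finrank_eq_zero.mp h)
    have hhpos : (0 : ℚ) < (finrank ℂ ↥H : ℚ) := by
      exact_mod_cast Nat.pos_of_ne_zero hh0
    have hpair : ∀ i j : Fin m, i ≠ j →
        finrank ℂ ↥(Vcfg m i ⊓ H) + finrank ℂ ↥(Vcfg m j ⊓ H) ≤ finrank ℂ ↥H := by
      intro i j hij
      have hdisj : WW ((i : ℕ) : ℂ) ⊓ WW ((j : ℕ) : ℂ) = ⊥ := WW_disjoint (htinj i j hij)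
      have e1 := Submodule.finrank_sup_add_finrank_inf_eq (Vcfg m i ⊓ H) (Vcfg m j ⊓ H)
      have e2 : (Vcfg m i ⊓ H) ⊓ (Vcfg m j ⊓ H) = ⊥ := by
        rw [eq_bot_iff, ← hdisj]
        exact inf_le_inf inf_le_left inf_le_left
      have e3 : finrank ℂ ↥((Vcfg m i ⊓ H) ⊔ (Vcfg m j ⊓ H)) ≤ finrank ℂ ↥H :=
        Submodule.finrank_mono (sup_le inf_le_right inf_le_right)
      rw [e2] at e1
      have hb0 : finrank ℂ ↥(⊥ : Submodule ℂ (Fin 4 → ℂ)) = 0 := finrank_bot ℂ _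
      omega
    have hkey := key_ineq ω (fun i => finrank ℂ ↥(Vcfg m i ⊓ H)) (finrank ℂ ↥H) hpair
      (fun i => by have := hhalf i; linarith)
    rw [htot]
    unfold slopeSub
    rw [div_le_div_iff₀ hhpos (by norm_num)]
    linarith [hkey]
  · -- not stable
    intro hst
    have h1 := hst H0 H0_ne_bot H0_ne_top
    have hd : ∀ i : Fin m, 1 ≤ finrank ℂ ↥(Vcfg m i ⊓ H0) := by
      intro i
      rw [Nat.one_le_iff_ne_zero, Ne, Submodule.finrank_eq_zero]
      intro hb
      have hmem : aa ((i : ℕ) : ℂ) ∈ Vcfg m i ⊓ H0 := ⟨aa_mem_WW _, aa_mem_H0 _⟩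
      rw [hb, Submodule.mem_bot] at hmem
      have := congrFun hmem 0
      simp [aa] at this
    have hge : (∑ j, (ω j : ℚ)) ≤ ∑ i, (ω i : ℚ) * (finrank ℂ ↥(Vcfg m i ⊓ H0) : ℚ) := by
      refine Finset.sum_le_sum fun i _ => ?_
      have : (1 : ℚ) ≤ (finrank ℂ ↥(Vcfg m i ⊓ H0) : ℚ) := by exact_mod_cast hd i
      nlinarith [Nat.cast_nonneg (α := ℚ) (ω i)]
    rw [htot] at h1
    unfold slopeSub at h1
    rw [H0_rank] at h1
    rw [div_lt_div_iff₀ (by norm_num) (by norm_num)] at h1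
    push_cast at h1
    linarith
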